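/- arXiv:2010.12987 — 2 statements merged into one kernel-verified Lean document; each statement's English description precedes it below -/
import Mathlib

section
/- For every positive integer k, the map sending n ∈ {1, 2, ..., 2^k} to its parity vector (T^0(n) mod 2, T^1(n) mod 2, ..., T^{k-1}(n) mod 2) is a bijection onto (ℤ/2)^k. -/
def T (n : ℕ) : ℕ := if n % 2 = 0 then n / 2 else (3 * n + 1) / 2

lemma T_key (j : ℕ) : ∀ m n : ℕ, (∀ i < j, T^[i] m % 2 = T^[i] n % 2) →
    m % 2 ^ j = n % 2 ^ j := by
  induction j with
  | zero => intro m n _; omega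
  | succ j ih =>
    intro m n h
    have h0 : m % 2 = n % 2 := by simpa using h 0 (Nat.succ_pos j)
    have hT : T m % 2 ^ j = T n % 2 ^ j := by
      apply ih
      intro i hi
      have := h (i + 1) (by omega)
      simpa [Function.iterate_succ_apply] using this
    have key : m % 2 ^ (j + 1) = n % 2 ^ (j + 1) := by
      rcases Nat.even_or_odd m with hm | hm
      · have hm2 : m % 2 = 0 := Nat.even_iff.mp hm
        have hn2 : n % 2 = 0 := by omega
        have hTm : T m = m / 2 := by simp [T, hm2]
        have hTn : T n = n / 2 := by simp [T, hn2]
        rw [hTm, hTn] at hT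
        have : m / 2 ≡ n / 2 [MOD 2 ^ j] := hT
        have h2 : m ≡ n [MOD 2 ^ (j + 1)] := by
          have h5 := Nat.ModEq.mul_left' (c := 2) this
          have hm' : 2 * (m / 2) = m := by omega
          have hn' : 2 * (n / 2) = n := by omega
          rw [hm', hn'] at h5
          have he : 2 * 2 ^ j = 2 ^ (j + 1) := by ring
          rwa [he] at h5
        exact h2
      · have hm2 : m % 2 = 1 := Nat.odd_iff.mp hm
        have hn2 : n % 2 = 1 := by omega
        have hTm : T m = (3 * m + 1) / 2 := by simp [T, hm2]
        have hTn : T n = (3 * n + 1) / 2 := by simp [T, hn2]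
        rw [hTm, hTn] at hT
        have : (3 * m + 1) / 2 ≡ (3 * n + 1) / 2 [MOD 2 ^ j] := hT
        have h3 : 3 * m + 1 ≡ 3 * n + 1 [MOD 2 ^ (j + 1)] := by
          have h5 := Nat.ModEq.mul_left' (c := 2) this
          have hm' : 2 * ((3 * m + 1) / 2) = 3 * m + 1 := by omega
          have hn' : 2 * ((3 * n + 1) / 2) = 3 * n + 1 := by omega
          rw [hm', hn'] at h5
          have he : 2 * 2 ^ j = 2 ^ (j + 1) := by ring
          rwa [he] at h5
        have h4 : 3 * m ≡ 3 * n [MOD 2 ^ (j + 1)] := Nat.ModEq.add_right_cancel' 1 h3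
        have hcop : Nat.Coprime 3 (2 ^ (j + 1)) := by
          exact Nat.Coprime.pow_right _ (by norm_num)
        exact (Nat.ModEq.cancel_left_of_coprime (by simpa using hcop.gcd_eq_one) h4)
    exact key

theorem stmt_3 (k : ℕ) (hk : 1 ≤ k) :
    Function.Bijective
      (fun n : Fin (2 ^ k) => fun i : Fin k => ((T^[(i : ℕ)] ((n : ℕ) + 1) : ℕ) : ZMod 2)) := by
  rw [Fintype.bijective_iff_injective_and_card]
  constructor
  · intro m n hmn
    have h : ∀ i < k, T^[i] ((m : ℕ) + 1) % 2 = T^[i] ((n : ℕ) + 1) % 2 := by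
      intro i hi
      have := congrFun hmn ⟨i, hi⟩
      simp only at this
      exact (ZMod.natCast_eq_natCast_iff _ _ _).mp this
    have hmod := T_key k _ _ h
    have hm1 : (m : ℕ) + 1 ≤ 2 ^ k := m.2
    have hn1 : (n : ℕ) + 1 ≤ 2 ^ k := n.2
    have hk2 : 0 < 2 ^ k := Nat.pow_pos (by norm_num)
    have : (m : ℕ) = (n : ℕ) := by
      rcases eq_or_lt_of_le hm1 with h1 | h1 <;> rcases eq_or_lt_of_le hn1 with h2 | h2
      · omega
      · rw [h1, Nat.mod_self, Nat.mod_eq_of_lt h2] at hmod; omega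
      · rw [h2, Nat.mod_self, Nat.mod_eq_of_lt h1] at hmod; omega
      · rw [Nat.mod_eq_of_lt h1, Nat.mod_eq_of_lt h2] at hmod; omega
    exact Fin.ext this
  · simp [ZMod.card]
end

section
/- For every d with 1/2 < d < 1, the proportion of n ∈ {1, ..., 2^k} with S_k(n) ≤ d·k tends to 1 as k → ∞, where S_k(n) = #{0 ≤ i ≤ k-1 : T^i(n) is odd}. -/
def S (k n : ℕ) : ℕ := ((Finset.range k).filter (fun i => T^[i] n % 2 = 1)).card

lemma parity_det : ∀ k n m, (∀ i < k, T^[i] n % 2 = T^[i] m % 2) → n ≡ m [MOD 2^k] := by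
  intro k
  induction k with
  | zero => intro n m _; simp [Nat.ModEq, Nat.mod_one]
  | succ k ih =>
    intro n m h
    have h0 : n % 2 = m % 2 := by simpa using h 0 (Nat.succ_pos k)
    have hT : T n ≡ T m [MOD 2^k] := by
      apply ih
      intro i hi
      have := h (i+1) (by omega)
      simpa [Function.iterate_succ_apply] using this
    rcases Nat.even_or_odd n with he | ho
    · have hn2 : n % 2 = 0 := Nat.even_iff.mp he
      have hm2 : m % 2 = 0 := h0 ▸ hn2
      have hTn : T n = n / 2 := by simp [T, hn2]
      have hTm : T m = m / 2 := by simp [T, hm2]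
      have : 2 * (n / 2) ≡ 2 * (m / 2) [MOD 2 * 2^k] := by
        rw [hTn, hTm] at hT; exact hT.mul_left' 2
      have hn : 2 * (n / 2) = n := Nat.two_mul_div_two_of_even he
      have hm : 2 * (m / 2) = m := Nat.two_mul_div_two_of_even (Nat.even_iff.mpr hm2)
      rw [hn, hm] at this
      simpa [pow_succ, mul_comm] using this
    · have hn2 : n % 2 = 1 := Nat.odd_iff.mp ho
      have hm2 : m % 2 = 1 := h0 ▸ hn2
      have hTn : T n = (3 * n + 1) / 2 := by simp [T, hn2]
      have hTm : T m = (3 * m + 1) / 2 := by simp [T, hm2]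
      have hen : 2 * ((3 * n + 1) / 2) = 3 * n + 1 := by omega
      have hem : 2 * ((3 * m + 1) / 2) = 3 * m + 1 := by omega
      have h2 : 2 * ((3*n+1)/2) ≡ 2 * ((3*m+1)/2) [MOD 2 * 2^k] :=
        by rw [hTn, hTm] at hT; exact hT.mul_left' 2
      rw [hen, hem] at h2
      have h3 : 3 * n ≡ 3 * m [MOD 2^(k+1)] := by
        have h2' : 3 * n + 1 ≡ 3 * m + 1 [MOD 2^(k+1)] := by
          simpa [pow_succ, mul_comm] using h2
        exact Nat.ModEq.add_right_cancel' 1 h2'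
      exact Nat.ModEq.cancel_left_of_coprime (by
        have : Nat.Coprime 3 (2^(k+1)) := Nat.Coprime.pow_right _ (by decide)
        simpa [Nat.Coprime, Nat.gcd_comm] using this) h3

def G (k n : ℕ) : Fin k → Bool := fun i => decide (T^[i.1] n % 2 = 1)

def wt {k : ℕ} (v : Fin k → Bool) : ℕ := (Finset.univ.filter (fun i => v i = true)).card

lemma S_eq_wt (k n : ℕ) : S k n = wt (G k n) := by
  unfold S wt G
  rw [eq_comm]
  apply Finset.card_bij (fun (a : Fin k) _ => (a : ℕ))
  · intro a ha
    simp only [Finset.mem_filter, Finset.mem_univ, true_and, decide_eq_true_eq] at ha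
    simp [Finset.mem_filter, Finset.mem_range, a.2, ha]
  · intro a _ b _ h; exact Fin.ext h
  · intro b hb
    simp only [Finset.mem_filter, Finset.mem_range] at hb
    exact ⟨⟨b, hb.1⟩, by simp [Finset.mem_filter, hb.2], rfl⟩

lemma G_injOn (k : ℕ) : Set.InjOn (G k) (Finset.range (2^k) : Set ℕ) := by
  intro n hn m hm h
  simp only [Finset.coe_range, Set.mem_Iio] at hn hm
  have : ∀ i < k, T^[i] n % 2 = T^[i] m % 2 := by
    intro i hi
    have := congrFun h ⟨i, hi⟩
    simp only [G, decide_eq_decide] at this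
    omega
  have hmod := parity_det k n m this
  rwa [Nat.ModEq, Nat.mod_eq_of_lt hn, Nat.mod_eq_of_lt hm] at hmod

lemma card_transfer (k : ℕ) (Q : (Fin k → Bool) → Prop) [DecidablePred Q] :
    ((Finset.range (2^k)).filter (fun n => Q (G k n))).card
      = (Finset.univ.filter Q).card := by
  have himg : (Finset.range (2^k)).image (G k) = Finset.univ := by
    apply Finset.eq_univ_of_card
    rw [Finset.card_image_of_injOn (G_injOn k), Finset.card_range]
    simp [Fintype.card_fun]
  apply Finset.card_bij (fun n _ => G k n)
  · intro n hn
    simp only [Finset.mem_filter] at hn ⊢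
    exact ⟨Finset.mem_univ _, hn.2⟩
  · intro n hn m hm h
    exact G_injOn k (by simpa using Finset.mem_of_mem_filter _ hn)
      (by simpa using Finset.mem_of_mem_filter _ hm) h
  · intro v hv
    simp only [Finset.mem_filter, Finset.mem_univ, true_and] at hv
    have : v ∈ (Finset.range (2^k)).image (G k) := himg ▸ Finset.mem_univ v
    obtain ⟨n, hn, rfl⟩ := Finset.mem_image.mp this
    exact ⟨n, Finset.mem_filter.mpr ⟨hn, hv⟩, rfl⟩

noncomputable def eps (b : Bool) : ℝ := if b then 1 else -1

lemma eps_not (b : Bool) : eps (!b) = - eps b := by cases b <;> simp [eps]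

lemma wt_eq (k : ℕ) (v : Fin k → Bool) :
    2 * (wt v : ℝ) - k = ∑ i, eps (v i) := by
  have h : (wt v : ℝ) = ∑ i, (if v i = true then (1:ℝ) else 0) := by
    unfold wt; rw [Finset.card_filter]; push_cast; simp
  have hk : (k : ℝ) = ∑ _i : Fin k, (1:ℝ) := by simp
  rw [h, hk, Finset.mul_sum, ← Finset.sum_sub_distrib]
  apply Finset.sum_congr rfl
  intro i _
  cases hv : v i <;> simp [eps] <;> norm_num

lemma epsPairSum (k : ℕ) (i j : Fin k) :
    ∑ v : Fin k → Bool, eps (v i) * eps (v j) = if i = j then ((2:ℝ)^k) else 0 := by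
  split_ifs with hij
  · subst hij
    have : ∀ v : Fin k → Bool, eps (v i) * eps (v i) = 1 := by
      intro v; cases v i <;> simp [eps]
    simp only [this]
    simp [Finset.card_univ]
  · apply Finset.sum_ninvolution (fun v => Function.update v i (!(v i)))
    · intro v
      rw [Function.update_self, Function.update_of_ne (by intro h; exact hij h.symm)]
      rw [eps_not]; ring
    · intro v _ 
      intro h
      have := congrFun h i
      simp [Function.update_self] at this
    · intro v; exact Finset.mem_univ _
    · intro v
      funext l
      by_cases hl : l = i
      · subst hl; simp [Function.update_self]
      · simp [Function.update_of_ne hl]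

lemma sum_sq (k : ℕ) :
    ∑ v : Fin k → Bool, (2 * (wt v : ℝ) - k)^2 = (k : ℝ) * 2^k := by
  have h1 : ∀ v : Fin k → Bool, (2 * (wt v : ℝ) - k)^2
      = ∑ i, ∑ j, eps (v i) * eps (v j) := by
    intro v
    rw [wt_eq, sq, Finset.sum_mul_sum]
  calc ∑ v : Fin k → Bool, (2 * (wt v : ℝ) - k)^2
      = ∑ v : Fin k → Bool, ∑ i, ∑ j, eps (v i) * eps (v j) :=
        Finset.sum_congr rfl (fun v _ => h1 v)
    _ = ∑ i, ∑ j, ∑ v : Fin k → Bool, eps (v i) * eps (v j) := by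
        rw [Finset.sum_comm]
        apply Finset.sum_congr rfl
        intro i _
        rw [Finset.sum_comm]
    _ = ∑ i : Fin k, ((2:ℝ)^k) := by
        apply Finset.sum_congr rfl
        intro i _
        simp [epsPairSum, Finset.sum_ite_eq]
    _ = (k : ℝ) * 2^k := by simp [mul_comm]

lemma iter_zero (i : ℕ) : T^[i] 0 = 0 := by
  induction i with
  | zero => rfl
  | succ i ih => rw [Function.iterate_succ_apply', ih]; simp [T]

lemma S_zero (k : ℕ) : S k 0 = 0 := by
  simp [S, iter_zero]

lemma iter_pow (k : ℕ) : ∀ i ≤ k, T^[i] (2^k) = 2^(k-i) := by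
  intro i
  induction i with
  | zero => simp
  | succ i ih =>
    intro hik
    rw [Function.iterate_succ_apply', ih (by omega)]
    have h2 : 2^(k-i) % 2 = 0 := by
      have : k - i = (k - i - 1) + 1 := by omega
      rw [this, pow_succ, Nat.mul_mod_left]
    simp only [T, h2, if_true, if_pos rfl]
    have : k - i = (k - i - 1) + 1 := by omega
    rw [this, pow_succ, Nat.mul_div_cancel _ (by norm_num : 0 < 2),
      show k - i - 1 = k - (i+1) from by omega]

lemma S_pow (k : ℕ) : S k (2^k) = 0 := by
  unfold S
  rw [Finset.card_eq_zero, Finset.filter_eq_empty_iff]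
  intro i hi
  rw [Finset.mem_range] at hi
  rw [iter_pow k i (le_of_lt hi)]
  have : k - i = (k - i - 1) + 1 := by omega
  rw [this, pow_succ, Nat.mul_mod_left]
  omega

lemma icc_to_range (k : ℕ) (P : ℕ → Prop) [DecidablePred P] (h0 : P 0) (hN : P (2^k)) :
    ((Finset.Icc 1 (2^k)).filter P).card = ((Finset.range (2^k)).filter P).card := by
  have hNpos : 0 < 2^k := Nat.pow_pos (by norm_num)
  have e1 : Finset.Icc 1 (2^k) = insert (2^k) (Finset.Ico 1 (2^k)) := by
    ext x; simp [Finset.mem_Icc, Finset.mem_Ico, Finset.mem_insert]; omega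
  have e2 : Finset.range (2^k) = insert 0 (Finset.Ico 1 (2^k)) := by
    ext x; simp [Finset.mem_range, Finset.mem_Ico, Finset.mem_insert]; omega
  rw [e1, e2, Finset.filter_insert, Finset.filter_insert, if_pos hN, if_pos h0,
    Finset.card_insert_of_notMem (by simp), Finset.card_insert_of_notMem (by simp)]

lemma vec_bound (k : ℕ) (hk : 1 ≤ k) (d : ℝ) (hd1 : 1 / 2 < d) :
    ((Finset.univ.filter (fun v : Fin k → Bool => ¬ ((wt v : ℝ) ≤ d * k))).card : ℝ)
      ≤ 2^k / ((2*d-1)^2 * k) := by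
  set B := Finset.univ.filter (fun v : Fin k → Bool => ¬ ((wt v : ℝ) ≤ d * k)) with hB
  have hkpos : (0:ℝ) < k := by exact_mod_cast hk
  have hdpos : (0:ℝ) < 2*d - 1 := by linarith
  have key : ∀ v ∈ B, ((2*d-1)*k)^2 ≤ (2 * (wt v : ℝ) - k)^2 := by
    intro v hv
    rw [hB, Finset.mem_filter] at hv
    have h1 : d * k < (wt v : ℝ) := by push_neg at hv; exact hv.2
    have h2 : (2*d-1)*k ≤ 2 * (wt v : ℝ) - k := by nlinarith
    exact pow_le_pow_left₀ (by positivity) h2 2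
  have hsum : (B.card : ℝ) * ((2*d-1)*k)^2 ≤ (k : ℝ) * 2^k := by
    calc (B.card : ℝ) * ((2*d-1)*k)^2 = ∑ _v ∈ B, ((2*d-1)*k)^2 := by
          rw [Finset.sum_const, nsmul_eq_mul]
      _ ≤ ∑ v ∈ B, (2 * (wt v : ℝ) - k)^2 := Finset.sum_le_sum key
      _ ≤ ∑ v : Fin k → Bool, (2 * (wt v : ℝ) - k)^2 :=
          Finset.sum_le_sum_of_subset_of_nonneg (Finset.subset_univ B)
            (fun v _ _ => sq_nonneg _)
      _ = (k : ℝ) * 2^k := sum_sq k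
  rw [le_div_iff₀ (by positivity)]
  nlinarith [sq_nonneg ((2*d-1)*k), hsum]

theorem stmt_18 (d : ℝ) (hd1 : 1 / 2 < d) (hd2 : d < 1) :
    Filter.Tendsto
      (fun k : ℕ =>
        (((Finset.Icc 1 (2 ^ k)).filter (fun n => (S k n : ℝ) ≤ d * k)).card : ℝ) / 2 ^ k)
      Filter.atTop (nhds 1) := by
  have hdd : (0:ℝ) < 2*d - 1 := by linarith
  set c : ℝ := ((2*d-1)^2)⁻¹ with hcdef
  have hcpos : 0 < c := by positivity
  apply tendsto_of_tendsto_of_tendsto_of_le_of_le'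
    (g := fun k : ℕ => 1 - c / (k:ℝ)) (h := fun _ : ℕ => (1:ℝ))
  · have h0 : Filter.Tendsto (fun k : ℕ => c / (k:ℝ)) Filter.atTop (nhds 0) :=
      tendsto_const_div_atTop_nhds_zero_nat c
    have := (tendsto_const_nhds (x := (1:ℝ)) (f := Filter.atTop (α := ℕ))).sub h0
    simpa using this
  · exact tendsto_const_nhds
  · -- lower bound eventually
    filter_upwards [Filter.eventually_ge_atTop 1] with k hk
    have hkpos : (0:ℝ) < k := by exact_mod_cast hk
    have h2k : (0:ℝ) < 2^k := by positivity
    have hP0 : (S k 0 : ℝ) ≤ d * k := by rw [S_zero]; push_cast; nlinarith [Nat.cast_nonneg (α := ℝ) k]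
    have hPN : (S k (2^k) : ℝ) ≤ d * k := by rw [S_pow]; push_cast; nlinarith [Nat.cast_nonneg (α := ℝ) k]
    have step1 : ((Finset.Icc 1 (2^k)).filter (fun n => (S k n : ℝ) ≤ d * k)).card
        = ((Finset.range (2^k)).filter (fun n => (S k n : ℝ) ≤ d * k)).card :=
      icc_to_range k _ hP0 hPN
    have step2 : ((Finset.range (2^k)).filter (fun n => (S k n : ℝ) ≤ d * k)).card
        = ((Finset.range (2^k)).filter (fun n => (wt (G k n) : ℝ) ≤ d * k)).card := by
      congr 1
      apply Finset.filter_congr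
      intro n _
      rw [S_eq_wt]
    have step3 : ((Finset.range (2^k)).filter (fun n => (wt (G k n) : ℝ) ≤ d * k)).card
        = (Finset.univ.filter (fun v : Fin k → Bool => (wt v : ℝ) ≤ d * k)).card :=
      card_transfer k (fun v : Fin k → Bool => (wt v : ℝ) ≤ d * k)
    have step4 : (Finset.univ.filter (fun v : Fin k → Bool => (wt v : ℝ) ≤ d * k)).card
        + (Finset.univ.filter (fun v : Fin k → Bool => ¬ ((wt v : ℝ) ≤ d * k))).card
        = 2^k := by
      rw [Finset.card_filter_add_card_filter_not, Finset.card_univ]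
      simp
    have hbound := vec_bound k hk d hd1
    have hfrac : (2:ℝ)^k / ((2*d-1)^2 * k) = 2^k * (c / k) := by
      rw [hcdef]; field_simp
    have hA : ((2:ℝ)^k) * (1 - c / k) ≤
        (((Finset.Icc 1 (2^k)).filter (fun n => (S k n : ℝ) ≤ d * k)).card : ℝ) := by
      rw [step1, step2, step3]
      have h4' : ((Finset.univ.filter (fun v : Fin k → Bool => (wt v : ℝ) ≤ d * k)).card : ℝ)
          = 2^k - ((Finset.univ.filter
              (fun v : Fin k → Bool => ¬ ((wt v : ℝ) ≤ d * k))).card : ℝ) := by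
        have h4c : ((Finset.univ.filter (fun v : Fin k → Bool => (wt v : ℝ) ≤ d * k)).card : ℝ)
            + ((Finset.univ.filter (fun v : Fin k → Bool => ¬ ((wt v : ℝ) ≤ d * k))).card : ℝ)
            = 2^k := by exact_mod_cast step4
        linarith
      rw [h4']
      rw [hfrac] at hbound
      nlinarith
    rw [le_div_iff₀ h2k]
    nlinarith [hA]
  · -- upper bound
    filter_upwards with k
    have h2k : (0:ℝ) < 2^k := by positivity
    rw [div_le_one h2k]
    have : ((Finset.Icc 1 (2^k)).filter (fun n => (S k n : ℝ) ≤ d * k)).card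
        ≤ (Finset.Icc 1 (2^k)).card := Finset.card_filter_le _ _
    have hcard : (Finset.Icc 1 (2^k)).card = 2^k := by
      rw [Nat.card_Icc]; simp
    calc (((Finset.Icc 1 (2^k)).filter (fun n => (S k n : ℝ) ≤ d * k)).card : ℝ)
        ≤ ((Finset.Icc 1 (2^k)).card : ℝ) := by exact_mod_cast this
      _ = 2^k := by rw [hcard]; push_cast; ring
end
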